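/- Let b be a nonzero rational number and let f_b : ℚ → ℚ be given by f_b(z) = z + b/z. Then f_b has no rational point of exact period n ≥ 5: for every nonzero z ∈ ℚ and every n ≥ 5, z is not a periodic point of f_b of minimal period n. Equivalently, for every nonzero z ∈ ℚ, Function.minimalPeriod f_b z ≤ 4. -/

import Mathlib

open Function

private lemma fb_orbit_ne_zero {b : ℚ} (hb : b ≠ 0) {z : ℚ} (hz : z ≠ 0)
    {n : ℕ} (hn : 0 < n) (hzn : (fun w : ℚ => w + b / w)^[n] z = z) :
    ∀ k, (fun w : ℚ => w + b / w)^[k] z ≠ 0 := by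
  set f : ℚ → ℚ := fun w => w + b / w with hf
  have hf0 : f 0 = 0 := by simp [hf]
  intro k hk
  have hper : IsPeriodicPt f n z := hzn
  have hbig : IsPeriodicPt f (n * (k + 1)) z := hper.mul_const (k + 1)
  have hle : k ≤ n * (k + 1) := by nlinarith
  have : f^[n * (k + 1)] z = 0 := by
    have : f^[(n * (k + 1) - k) + k] z = 0 := by
      rw [iterate_add_apply, hk]
      exact iterate_fixed hf0 _
    rwa [Nat.sub_add_cancel hle] at this
  rw [hbig] at this
  exact hz this

private lemma fb_val_eq {b : ℚ} (hb : b ≠ 0) {z : ℚ} (hz : z ≠ 0)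
    {n : ℕ} (hn : 0 < n) (hzn : (fun w : ℚ => w + b / w)^[n] z = z)
    (p : ℕ) [Fact p.Prime] :
    padicValRat p ((fun w : ℚ => w + b / w)^[1] z) = padicValRat p z := by
  set f : ℚ → ℚ := fun w => w + b / w with hf
  set w : ℕ → ℚ := fun k => f^[k] z with hw
  have nz : ∀ k, w k ≠ 0 := fb_orbit_ne_zero hb hz hn hzn
  have per : ∀ k, w (k + n) = w k := by
    intro k
    show f^[k + n] z = f^[k] z
    rw [iterate_add_apply, hzn]
  set v : ℕ → ℤ := fun k => padicValRat p (w k) with hv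
  set β : ℤ := padicValRat p b with hβ
  have key : ∀ k, w k * w (k + 1) = w k ^ 2 + b := by
    intro k
    have h1 : w (k + 1) = w k + b / w k := by
      show f^[k + 1] z = _
      rw [add_comm, iterate_add_apply]
      rfl
    have h0 := nz k
    rw [h1]
    field_simp
  have keynz : ∀ k, w k ^ 2 + b ≠ 0 := by
    intro k
    rw [← key k]
    exact mul_ne_zero (nz k) (nz (k + 1))
  have sum : ∀ k, v k + v (k + 1) = padicValRat p (w k ^ 2 + b) := by
    intro k
    rw [← padicValRat.mul (nz k) (nz (k + 1)), key k]
  have sq : ∀ k, padicValRat p (w k ^ 2) = 2 * v k := by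
    intro k
    rw [padicValRat.pow (w k)]
    push_cast; ring
  -- Claim A : no point of the orbit has 2 * v k > β
  have claimA : ∀ k, 2 * v k ≤ β := by
    intro k
    by_contra hgt
    push_neg at hgt
    -- v (k+1+m) = β - v k for all m
    have ind : ∀ m, v (k + 1 + m) = β - v k := by
      intro m
      induction m with
      | zero =>
        have hlt : padicValRat p b < padicValRat p (w k ^ 2) := by
          rw [sq k]; exact hgt
        have : padicValRat p (b + w k ^ 2) = β := by
          exact padicValRat.add_eq_of_lt (by rw [add_comm]; exact keynz k) hb
            (pow_ne_zero 2 (nz k)) hlt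
        rw [add_comm] at this
        have h2 := sum k
        rw [this] at h2
        rw [Nat.add_zero]
        omega
      | succ m ih =>
        have hm : 2 * v (k + 1 + m) < β := by omega
        have hlt : padicValRat p (w (k + 1 + m) ^ 2) < padicValRat p b := by
          rw [sq]; exact hm
        have : padicValRat p (w (k + 1 + m) ^ 2 + b) = 2 * v (k + 1 + m) := by
          rw [padicValRat.add_eq_of_lt (keynz _) (pow_ne_zero 2 (nz _)) hb hlt, sq]
        have h2 := sum (k + 1 + m)
        rw [this] at h2
        have : v (k + 1 + m + 1) = v (k + 1 + m) := by omega
        rw [show k + 1 + (m + 1) = k + 1 + m + 1 by ring, this, ih]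
    have hkn : v (k + n) = v k := by
      show padicValRat p (w (k + n)) = padicValRat p (w k)
      rw [per k]
    have hm : v (k + 1 + (n - 1)) = β - v k := ind (n - 1)
    rw [show k + 1 + (n - 1) = k + n by omega] at hm
    omega
  -- Claim B : v is nondecreasing along the orbit
  have claimB : ∀ k, v k ≤ v (k + 1) := by
    intro k
    have hmin : min (padicValRat p (w k ^ 2)) (padicValRat p b)
        ≤ padicValRat p (w k ^ 2 + b) := padicValRat.min_le_padicValRat_add (keynz k)
    rw [sq k] at hmin
    have : 2 * v k ≤ padicValRat p (w k ^ 2 + b) := le_trans (le_min le_rfl (claimA k)) hmin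
    have h2 := sum k
    omega
  have mono : ∀ m, v 1 ≤ v (1 + m) := by
    intro m
    induction m with
    | zero => simp
    | succ m ih => exact le_trans ih (by rw [show 1 + (m + 1) = (1 + m) + 1 by ring]; exact claimB _)
  have h1 : v 1 ≤ v n := by
    have := mono (n - 1)
    rwa [show 1 + (n - 1) = n by omega] at this
  have h2 : v n = v 0 := by
    have := per 0
    simp only [zero_add] at this
    show padicValRat p (w n) = padicValRat p (w 0)
    rw [this]
  have h0 : v 0 ≤ v 1 := claimB 0
  have : v 1 = v 0 := le_antisymm (h1.trans h2.le) h0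
  simpa [hv, hw] using this

private lemma eq_one_or_neg_one_of_val {q : ℚ} (hq : q ≠ 0)
    (h : ∀ p : ℕ, p.Prime → padicValRat p q = 0) : q = 1 ∨ q = -1 := by
  have hden : q.den = 1 := by
    by_contra hd
    obtain ⟨p, hp, hpd⟩ := Nat.exists_prime_and_dvd hd
    haveI : Fact p.Prime := ⟨hp⟩
    have hnd : ¬ p ∣ q.num.natAbs := by
      intro hdvd
      have := Nat.Coprime.eq_one_of_dvd (q.reduced.coprime_dvd_left hdvd) hpd
      exact hp.one_lt.ne' this
    have h1 : padicValInt p q.num = 0 := by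
      apply padicValInt.eq_zero_of_not_dvd
      rwa [Int.natCast_dvd]
    have h2 : 1 ≤ padicValNat p q.den :=
      one_le_padicValNat_of_dvd q.pos.ne' hpd
    have := h p hp
    rw [padicValRat_def, h1] at this
    omega
  have hnum : q.num.natAbs = 1 := by
    by_contra hd
    obtain ⟨p, hp, hpd⟩ := Nat.exists_prime_and_dvd hd
    haveI : Fact p.Prime := ⟨hp⟩
    have h1 : 1 ≤ padicValNat p q.num.natAbs :=
      one_le_padicValNat_of_dvd (Int.natAbs_pos.mpr (Rat.num_ne_zero.mpr hq)).ne' hpd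
    have := h p hp
    rw [padicValRat_def, hden] at this
    simp only [padicValNat.one] at this
    unfold padicValInt at this
    omega
  have hq' : (q.num : ℚ) = q := by
    rw [← Rat.num_div_den q, hden]
    simp
  rcases Int.natAbs_eq_iff.mp hnum with h | h
  · left; rw [← hq', h]; norm_num
  · right; rw [← hq', h]; norm_num

theorem no_large_period_add (b : ℚ) (hb : b ≠ 0) (z : ℚ) (hz : z ≠ 0) :
    Function.minimalPeriod (fun w : ℚ => w + b / w) z ≤ 4 := by
  set f : ℚ → ℚ := fun w => w + b / w with hf
  by_cases hper : z ∈ periodicPts f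
  · set n := minimalPeriod f z with hn
    have hnpos : 0 < n := minimalPeriod_pos_of_mem_periodicPts hper
    have hzn : f^[n] z = z := isPeriodicPt_minimalPeriod f z
    have hfz : f z ≠ 0 := by
      have := fb_orbit_ne_zero hb hz hnpos hzn 1
      simpa using this
    have hval : ∀ p : ℕ, p.Prime → padicValRat p (f z / z) = 0 := by
      intro p hp
      haveI : Fact p.Prime := ⟨hp⟩
      have := fb_val_eq hb hz hnpos hzn p
      simp only [Function.iterate_one] at this
      rw [padicValRat.div hfz hz, this, sub_self]
    rcases eq_one_or_neg_one_of_val (div_ne_zero hfz hz) hval with h | h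
    · exfalso
      have : f z = z := by
        field_simp at h
        exact h
      have : b / z = 0 := by
        have := this
        simp only [hf] at this
        linarith
      exact hb ((div_eq_zero_iff.mp this).resolve_right hz)
    · have hfzneg : f z = -z := by
        field_simp at h
        linarith
      have h2 : IsPeriodicPt f 2 z := by
        show f^[2] z = z
        have h22 : f^[2] z = f (f z) := by
          simp [Function.iterate_succ_apply']
        rw [h22, hfzneg]
        show -z + b / (-z) = z
        have : b / (-z) = -(b / z) := by rw [div_neg]
        rw [this]
        have hfz' : z + b / z = -z := hfzneg
        linarith
      have := h2.minimalPeriod_dvd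
      have := Nat.le_of_dvd (by norm_num) this
      omega
  · rw [minimalPeriod_eq_zero_of_notMem_periodicPts hper]
    norm_num
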